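/- Consider a single group of n individuals with covariates L taking values in a measurable space, a random treatment vector A in {0,1}^n, and potential event times T_j(a) >= 0 for each individual j in {1,...,n} and each a in {0,1}^n. Let p(L, a) be a version of the conditional probability P(A = a | L), and assume: (I) the collection of potential event times {T_j(a) : j, a} is conditionally independent of A given L, and (II) p(L, a) > 0 almost surely for every a in {0,1}^n. Then for every t >= 0, a in {0,1}, alpha in (0,1), and every j: E[ pi(A_{-j}; alpha) * I(A_j = a) * I( T_j(A) <= t ) / p(L, A) ] = E[ sum over a_{-j} in {0,1}^{n-1} of pi(a_{-j}; alpha) * I( T_j(a, a_{-j}) <= t ) ]. -/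

import Mathlib

open MeasureTheory ProbabilityTheory Finset
open Filter Topology ENNReal NNReal

abbrev mC {Ω 𝓛 : Type*} [m𝓛 : MeasurableSpace 𝓛] (L : Ω → 𝓛) : MeasurableSpace Ω :=
  MeasurableSpace.comap L m𝓛

lemma tv_core {Ω : Type*} [MeasureSpace Ω] [IsProbabilityMeasure (ℙ : Measure Ω)]
    {𝓛 : Type*} [MeasurableSpace 𝓛] {L : Ω → 𝓛} (hL : Measurable L)
    {S B : Set Ω} (hS : MeasurableSet S) (hB : MeasurableSet B)
    (hmul : ((ℙ : Measure Ω)⟦S ∩ B | mC L⟧) =ᵐ[(ℙ : Measure Ω)]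
      fun ω => ((ℙ : Measure Ω)⟦S | mC L⟧) ω * ((ℙ : Measure Ω)⟦B | mC L⟧) ω)
    {p : Ω → ℝ} (hpq : p =ᵐ[(ℙ : Measure Ω)] (ℙ : Measure Ω)⟦B | mC L⟧)
    (hppos : ∀ᵐ ω ∂(ℙ : Measure Ω), 0 < p ω) :
    Integrable (fun ω => S.indicator (fun _ => (1:ℝ)) ω * B.indicator (fun _ => (1:ℝ)) ω / p ω)
      (ℙ : Measure Ω) ∧
    ∫ ω, S.indicator (fun _ => (1:ℝ)) ω * B.indicator (fun _ => (1:ℝ)) ω / p ω ∂(ℙ : Measure Ω)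
      = ∫ ω, S.indicator (fun _ => (1:ℝ)) ω ∂(ℙ : Measure Ω) := by
  have hm' : mC L ≤ (inferInstance : MeasurableSpace Ω) := hL.comap_le
  haveI : IsFiniteMeasure ((ℙ : Measure Ω).trim hm') := isFiniteMeasure_trim hm'
  set μ := (ℙ : Measure Ω)
  set q : Ω → ℝ := μ⟦B | mC L⟧ with hq_def
  have hqpos : ∀ᵐ ω ∂μ, 0 < q ω := by
    filter_upwards [hppos, hpq] with ω h1 h2; rw [← h2]; exact h1
  have hq_sm : StronglyMeasurable[mC L] q := stronglyMeasurable_condExp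
  have hq_meas : Measurable q := (hq_sm.mono hm').measurable
  have hSq_sm : StronglyMeasurable[mC L] (μ⟦S | mC L⟧) := stronglyMeasurable_condExp
  have hSind_int : Integrable (S.indicator (fun _ => (1:ℝ))) μ :=
    (integrable_const (1:ℝ)).indicator hS
  have hBind_int : Integrable (B.indicator (fun _ => (1:ℝ))) μ :=
    (integrable_const (1:ℝ)).indicator hB
  have hSBind_int : Integrable ((S ∩ B).indicator (fun _ => (1:ℝ))) μ :=
    (integrable_const (1:ℝ)).indicator (hS.inter hB)
  have hSq_nonneg : 0 ≤ᵐ[μ] μ⟦S | mC L⟧ :=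
    condExp_nonneg (Eventually.of_forall fun ω => Set.indicator_nonneg (fun _ _ => zero_le_one) ω)
  have hSq_le_one : μ⟦S | mC L⟧ ≤ᵐ[μ] fun _ => (1:ℝ) := by
    have := condExp_mono (μ := μ) (m := mC L) hSind_int (integrable_const (1:ℝ))
      (Eventually.of_forall fun ω => Set.indicator_le_self' (fun _ _ => zero_le_one) ω)
    refine this.trans ?_
    exact Eventually.of_forall fun ω => (congrFun (condExp_const (μ := μ) hm' (1:ℝ)) ω).le
  have hq_le_one : q ≤ᵐ[μ] fun _ => (1:ℝ) := by
    have := condExp_mono (μ := μ) (m := mC L) hBind_int (integrable_const (1:ℝ))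
      (Eventually.of_forall fun ω => Set.indicator_le_self' (fun _ _ => zero_le_one) ω)
    refine this.trans ?_
    exact Eventually.of_forall fun ω => (congrFun (condExp_const (μ := μ) hm' (1:ℝ)) ω).le
  -- truncated weights
  set g : ℕ → Ω → ℝ := fun N ω => min (max (q ω)⁻¹ 0) N with hg_def
  have hg_nonneg : ∀ N ω, 0 ≤ g N ω := fun N ω => le_min (le_max_right _ _) (Nat.cast_nonneg N)
  have hg_le : ∀ N ω, g N ω ≤ N := fun N ω => min_le_right _ _
  have hg_sm : ∀ N, StronglyMeasurable[mC L] (g N) := fun N =>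
    (((hq_sm.measurable.inv.max measurable_const).min measurable_const).stronglyMeasurable)
  have hg_meas : ∀ N, Measurable (g N) := fun N => ((hg_sm N).mono hm').measurable
  set f : ℕ → Ω → ℝ := fun N ω =>
    S.indicator (fun _ => (1:ℝ)) ω * B.indicator (fun _ => (1:ℝ)) ω * g N ω with hf_def
  have hSB_ind : (fun ω => S.indicator (fun _ => (1:ℝ)) ω * B.indicator (fun _ => (1:ℝ)) ω)
      = (S ∩ B).indicator (fun _ => (1:ℝ)) := by
    funext ω
    by_cases h1 : ω ∈ S <;> by_cases h2 : ω ∈ B <;>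
      simp [Set.indicator_apply, h1, h2, Set.mem_inter_iff]
  have hf_int : ∀ N, Integrable (f N) μ := by
    intro N
    refine Integrable.mono' (integrable_const (N:ℝ)) ?_ ?_
    · exact ((((measurable_const.indicator hS).mul (measurable_const.indicator hB)).mul
        (hg_meas N)).aestronglyMeasurable)
    · refine Eventually.of_forall fun ω => ?_
      have h1 : |S.indicator (fun _ => (1:ℝ)) ω| ≤ 1 := by
        by_cases h : ω ∈ S <;> simp [Set.indicator_apply, h]
      have h2 : |B.indicator (fun _ => (1:ℝ)) ω| ≤ 1 := by
        by_cases h : ω ∈ B <;> simp [Set.indicator_apply, h]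
      have h3 : |g N ω| ≤ N := abs_le.2 ⟨by linarith [hg_nonneg N ω, Nat.cast_nonneg (α := ℝ) N],
        hg_le N ω⟩
      calc ‖f N ω‖ = |S.indicator (fun _ => (1:ℝ)) ω| * |B.indicator (fun _ => (1:ℝ)) ω|
            * |g N ω| := by rw [Real.norm_eq_abs, abs_mul, abs_mul]
        _ ≤ 1 * 1 * N := by gcongr
        _ = N := by ring
  -- key identity: ∫ f N = ∫ condexpS * q * g N
  have key : ∀ N, ∫ ω, f N ω ∂μ = ∫ ω, (μ⟦S | mC L⟧) ω * q ω * g N ω ∂μ := by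
    intro N
    have hmul' : (fun ω => g N ω * ((S ∩ B).indicator (fun _ => (1:ℝ)) ω))
        = g N * ((S ∩ B).indicator (fun _ => (1:ℝ))) := rfl
    have hint_prod : Integrable (g N * (S ∩ B).indicator (fun _ => (1:ℝ))) μ := by
      have : (g N * (S ∩ B).indicator (fun _ => (1:ℝ)))
          = fun ω => g N ω * (S ∩ B).indicator (fun _ => (1:ℝ)) ω := rfl
      rw [this]
      refine Integrable.mono' (integrable_const (N:ℝ)) ?_ ?_
      · exact ((hg_meas N).mul (measurable_const.indicator (hS.inter hB))).aestronglyMeasurable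
      · refine Eventually.of_forall fun ω => ?_
        have h2 : |(S ∩ B).indicator (fun _ => (1:ℝ)) ω| ≤ 1 := by
          by_cases h : ω ∈ S ∩ B <;> simp [Set.indicator_apply, h]
        have h3 : |g N ω| ≤ N := abs_le.2 ⟨by
          linarith [hg_nonneg N ω, Nat.cast_nonneg (α := ℝ) N], hg_le N ω⟩
        calc ‖g N ω * (S ∩ B).indicator (fun _ => (1:ℝ)) ω‖
            = |g N ω| * |(S ∩ B).indicator (fun _ => (1:ℝ)) ω| := by
              rw [Real.norm_eq_abs, abs_mul]
          _ ≤ N * 1 := by gcongr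
          _ = N := by ring
    have pull : μ[g N * (S ∩ B).indicator (fun _ => (1:ℝ)) | mC L]
        =ᵐ[μ] g N * μ⟦S ∩ B | mC L⟧ :=
      condExp_mul_of_stronglyMeasurable_left (hg_sm N) hint_prod hSBind_int
    calc ∫ ω, f N ω ∂μ = ∫ ω, (g N * (S ∩ B).indicator (fun _ => (1:ℝ))) ω ∂μ := by
          refine integral_congr_ae (Eventually.of_forall fun ω => ?_)
          simp only [hf_def, Pi.mul_apply]
          rw [← hSB_ind]; ring
      _ = ∫ ω, (μ[g N * (S ∩ B).indicator (fun _ => (1:ℝ)) | mC L]) ω ∂μ :=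
          (integral_condExp hm').symm
      _ = ∫ ω, (μ⟦S | mC L⟧) ω * q ω * g N ω ∂μ := by
          refine integral_congr_ae ?_
          filter_upwards [pull, hmul] with ω h1 h2
          rw [h1]; simp only [Pi.mul_apply]; rw [h2]; ring
  -- a.e. identity for the RHS integrand
  have rhs_ae : ∀ N, (fun ω => (μ⟦S | mC L⟧) ω * q ω * g N ω)
      =ᵐ[μ] fun ω => (μ⟦S | mC L⟧) ω * min 1 (N * q ω) := by
    intro N
    filter_upwards [hqpos] with ω hq
    have : g N ω = min (q ω)⁻¹ N := by
      simp only [hg_def, max_eq_left (le_of_lt (inv_pos.2 hq))]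
    rw [this]
    have : q ω * min (q ω)⁻¹ (N:ℝ) = min 1 ((N:ℝ) * q ω) := by
      rw [mul_min_of_nonneg _ _ (le_of_lt hq), mul_inv_cancel₀ (ne_of_gt hq), mul_comm]
    rw [mul_assoc, this]
  have rhs_int : ∀ N : ℕ, Integrable (fun ω => (μ⟦S | mC L⟧) ω * min 1 ((N : ℝ) * q ω)) μ := by
    intro N
    refine Integrable.mono' (integrable_const (1:ℝ)) ?_ ?_
    · exact ((hSq_sm.mono hm').measurable.mul
        (measurable_const.min (measurable_const.mul hq_meas))).aestronglyMeasurable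
    · filter_upwards [hSq_nonneg, hSq_le_one, hqpos] with ω h0 h1 hq
      have hmin0 : 0 ≤ min 1 ((N:ℝ) * q ω) :=
        le_min zero_le_one (mul_nonneg (Nat.cast_nonneg N) hq.le)
      have hmin1 : min 1 ((N:ℝ) * q ω) ≤ 1 := min_le_left _ _
      rw [Real.norm_eq_abs, abs_of_nonneg (mul_nonneg h0 hmin0)]
      calc (μ⟦S | mC L⟧) ω * min 1 ((N:ℝ) * q ω) ≤ 1 * 1 := by gcongr
        _ = 1 := by ring
  -- pointwise limits
  set F : Ω → ℝ := fun ω =>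
    S.indicator (fun _ => (1:ℝ)) ω * B.indicator (fun _ => (1:ℝ)) ω * max (q ω)⁻¹ 0
    with hF_def
  have hF_nonneg : ∀ ω, 0 ≤ F ω := fun ω =>
    mul_nonneg (mul_nonneg (Set.indicator_nonneg (fun _ _ => zero_le_one) ω)
      (Set.indicator_nonneg (fun _ _ => zero_le_one) ω)) (le_max_right _ _)
  have hF_meas : Measurable F :=
    (((measurable_const.indicator hS).mul (measurable_const.indicator hB)).mul
      (hq_meas.inv.max measurable_const))
  have h_mono : ∀ ω, Monotone fun N => f N ω := by
    intro ω N M hNM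
    have : g N ω ≤ g M ω := min_le_min le_rfl (Nat.cast_le.2 hNM)
    exact mul_le_mul_of_nonneg_left this
      (mul_nonneg (Set.indicator_nonneg (fun _ _ => zero_le_one) ω)
        (Set.indicator_nonneg (fun _ _ => zero_le_one) ω))
  have hg_tend : ∀ ω, Tendsto (fun N => g N ω) atTop (𝓝 (max (q ω)⁻¹ 0)) := by
    intro ω
    refine Tendsto.congr' ?_ (tendsto_const_nhds (x := max (q ω)⁻¹ 0))
    filter_upwards [eventually_ge_atTop ⌈max (q ω)⁻¹ 0⌉₊] with N hN
    exact (min_eq_left ((Nat.le_ceil _).trans (Nat.cast_le.2 hN))).symm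
  have h_tend : ∀ ω, Tendsto (fun N => f N ω) atTop (𝓝 (F ω)) :=
    fun ω => (hg_tend ω).const_mul _
  -- the integrals ∫ f N are bounded by 1
  have h_fN_le : ∀ N, ∫ ω, f N ω ∂μ ≤ 1 := by
    intro N
    rw [key N, integral_congr_ae (rhs_ae N)]
    calc ∫ ω, (μ⟦S | mC L⟧) ω * min 1 ((N:ℝ) * q ω) ∂μ ≤ ∫ _ω, (1:ℝ) ∂μ := by
          refine integral_mono_ae (rhs_int N) (integrable_const 1) ?_
          filter_upwards [hSq_nonneg, hSq_le_one, hqpos] with ω h0 h1 hq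
          have hmin1 : min 1 ((N:ℝ) * q ω) ≤ 1 := min_le_left _ _
          have hmin0 : 0 ≤ min 1 ((N:ℝ) * q ω) :=
            le_min zero_le_one (mul_nonneg (Nat.cast_nonneg N) hq.le)
          calc (μ⟦S | mC L⟧) ω * min 1 ((N:ℝ) * q ω) ≤ 1 * 1 := by gcongr
            _ = 1 := by ring
      _ = 1 := by simp
  have h_fN_nonneg : ∀ N ω, 0 ≤ f N ω := fun N ω =>
    mul_nonneg (mul_nonneg (Set.indicator_nonneg (fun _ _ => zero_le_one) ω)
      (Set.indicator_nonneg (fun _ _ => zero_le_one) ω)) (hg_nonneg N ω)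
  -- integrability of F via monotone convergence in ℝ≥0∞
  have hF_int : Integrable F μ := by
    refine ⟨hF_meas.aestronglyMeasurable, ?_⟩
    have hlim : Tendsto (fun N => ∫⁻ ω, ENNReal.ofReal (f N ω) ∂μ) atTop
        (𝓝 (∫⁻ ω, ENNReal.ofReal (F ω) ∂μ)) := by
      refine lintegral_tendsto_of_tendsto_of_monotone
        (fun N => (ENNReal.measurable_ofReal.comp
          ((((measurable_const.indicator hS).mul (measurable_const.indicator hB)).mul
            (hg_meas N)))).aemeasurable) ?_ ?_
      · exact Eventually.of_forall fun ω N M hNM => ENNReal.ofReal_le_ofReal (h_mono ω hNM)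
      · exact Eventually.of_forall fun ω =>
          (ENNReal.continuous_ofReal.tendsto _).comp (h_tend ω)
    have hbound : ∀ N, ∫⁻ ω, ENNReal.ofReal (f N ω) ∂μ ≤ 1 := by
      intro N
      rw [← ofReal_integral_eq_lintegral_ofReal (hf_int N)
        (Eventually.of_forall (h_fN_nonneg N))]
      calc ENNReal.ofReal (∫ ω, f N ω ∂μ) ≤ ENNReal.ofReal 1 :=
            ENNReal.ofReal_le_ofReal (h_fN_le N)
        _ = 1 := ENNReal.ofReal_one
    have hFle : ∫⁻ ω, ENNReal.ofReal (F ω) ∂μ ≤ 1 :=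
      le_of_tendsto hlim (Eventually.of_forall hbound)
    have : (fun ω => ‖F ω‖ₑ) = fun ω => ENNReal.ofReal (F ω) := by
      funext ω; exact Real.enorm_eq_ofReal (hF_nonneg ω)
    rw [HasFiniteIntegral, this]
    exact lt_of_le_of_lt hFle ENNReal.one_lt_top
  -- real monotone convergence
  have h_main : Tendsto (fun N => ∫ ω, f N ω ∂μ) atTop (𝓝 (∫ ω, F ω ∂μ)) :=
    integral_tendsto_of_tendsto_of_monotone hf_int hF_int
      (Eventually.of_forall h_mono) (Eventually.of_forall h_tend)
  -- dominated convergence for the other representation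
  have h_other : Tendsto (fun N => ∫ ω, f N ω ∂μ) atTop
      (𝓝 (∫ ω, S.indicator (fun _ => (1:ℝ)) ω ∂μ)) := by
    have h1 : ∀ N, ∫ ω, f N ω ∂μ = ∫ ω, (μ⟦S | mC L⟧) ω * min 1 ((N:ℝ) * q ω) ∂μ :=
      fun N => (key N).trans (integral_congr_ae (rhs_ae N))
    simp_rw [h1]
    have h2 : ∫ ω, S.indicator (fun _ => (1:ℝ)) ω ∂μ = ∫ ω, (μ⟦S | mC L⟧) ω ∂μ :=
      (integral_condExp hm').symm
    rw [h2]
    refine tendsto_integral_of_dominated_convergence (fun _ => (1:ℝ))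
      (fun N => (rhs_int N).1) (integrable_const 1) ?_ ?_
    · intro N
      filter_upwards [hSq_nonneg, hSq_le_one, hqpos] with ω h0 h1' hq
      have hmin1 : min 1 ((N:ℝ) * q ω) ≤ 1 := min_le_left _ _
      have hmin0 : 0 ≤ min 1 ((N:ℝ) * q ω) :=
        le_min zero_le_one (mul_nonneg (Nat.cast_nonneg N) hq.le)
      rw [Real.norm_eq_abs, abs_of_nonneg (mul_nonneg h0 hmin0)]
      calc (μ⟦S | mC L⟧) ω * min 1 ((N:ℝ) * q ω) ≤ 1 * 1 := by gcongr
        _ = 1 := by ring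
    · filter_upwards [hqpos] with ω hq
      have : Tendsto (fun N : ℕ => min 1 ((N:ℝ) * q ω)) atTop (𝓝 1) := by
        refine Tendsto.congr' ?_ (tendsto_const_nhds (x := (1:ℝ)))
        filter_upwards [eventually_ge_atTop ⌈(q ω)⁻¹⌉₊] with N hN
        have h1N : (q ω)⁻¹ ≤ (N:ℝ) := (Nat.le_ceil _).trans (Nat.cast_le.2 hN)
        have : (1:ℝ) ≤ (N:ℝ) * q ω := by
          rw [← inv_mul_cancel₀ (ne_of_gt hq)]
          exact mul_le_mul_of_nonneg_right h1N hq.le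
        exact (min_eq_left this).symm
      have := this.const_mul ((μ⟦S | mC L⟧) ω)
      simpa using this
  have hFint_eq : ∫ ω, F ω ∂μ = ∫ ω, S.indicator (fun _ => (1:ℝ)) ω ∂μ :=
    tendsto_nhds_unique h_main h_other
  -- relate F to the original integrand
  have h_ae : (fun ω => S.indicator (fun _ => (1:ℝ)) ω * B.indicator (fun _ => (1:ℝ)) ω / p ω)
      =ᵐ[μ] F := by
    filter_upwards [hpq, hppos] with ω hpω hpos
    have hqω : q ω = p ω := hpω.symm
    have hqpos' : 0 < q ω := hqω ▸ hpos
    simp only [hF_def]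
    rw [max_eq_left (le_of_lt (inv_pos.2 hqpos')), hqω, div_eq_mul_inv]
  refine ⟨hF_int.congr h_ae.symm, ?_⟩
  rw [integral_congr_ae h_ae, hFint_eq]


/-- **Unbiasedness of the Tchetgen Tchetgen–VanderWeele IPW estimator (no censoring).**
With covariates `L`, treatment vector `A ∈ {0,1}^n`, and potential event times `T j b ≥ 0`:
if (I) the potential event times are conditionally independent of the treatment given `L`, and
(II) the group propensity score `p (L, b)` (a version of `P(A = b | L)`) is a.s. positive for
every `b`, then for every `t ≥ 0`, individual treatment `a`, allocation `α ∈ (0,1)` and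
individual `j`,
`E[ π(A₋ⱼ;α) I(Aⱼ = a) I(Tⱼ(A) ≤ t) / p(L, A) ]
  = E[ ∑_{a₋ⱼ} I(Tⱼ(a, a₋ⱼ) ≤ t) π(a₋ⱼ; α) ]`. -/
theorem tv_ipw_unbiased
    {Ω : Type*} [MeasureSpace Ω] [IsProbabilityMeasure (ℙ : Measure Ω)]
    [StandardBorelSpace Ω] [Nonempty Ω]
    {𝓛 : Type*} [MeasurableSpace 𝓛]
    (n : ℕ) (L : Ω → 𝓛) (A : Ω → Fin n → Bool)
    (T : Ω → Fin n → (Fin n → Bool) → ℝ)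
    (hL : Measurable L) (hA : Measurable A) (hT : Measurable T)
    (hTnn : ∀ ω j b, 0 ≤ T ω j b)
    (p : 𝓛 → (Fin n → Bool) → ℝ)
    -- `p (L, b)` is a version of the conditional probability `P(A = b | L)`
    (hp : ∀ b : Fin n → Bool,
      (fun ω => p (L ω) b)
        =ᵐ[(ℙ : Measure Ω)]
      (ℙ : Measure Ω)[(fun ω => if A ω = b then (1 : ℝ) else 0) |
        MeasurableSpace.comap L inferInstance])
    -- (I) conditionally independent treatment: `{T j b} ⫫ A ∣ L`
    (hCI : CondIndepFun (MeasurableSpace.comap L inferInstance) hL.comap_le T A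
      (ℙ : Measure Ω))
    -- (II) treatment positivity
    (hppos : ∀ b : Fin n → Bool, ∀ᵐ ω ∂(ℙ : Measure Ω), 0 < p (L ω) b)
    (t : ℝ) (ht : 0 ≤ t) (a : Bool) (α : ℝ) (hα : α ∈ Set.Ioo (0 : ℝ) 1) (j : Fin n) :
    ∫ ω : Ω,
        (∏ k ∈ Finset.univ.erase j, (if A ω k then α else 1 - α)) *
          (if A ω j = a then (1 : ℝ) else 0) *
          (if T ω j (A ω) ≤ t then (1 : ℝ) else 0) / p (L ω) (A ω) ∂ℙ
      = ∫ ω : Ω,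
          ∑ b ∈ Finset.univ.filter (fun b : Fin n → Bool => b j = a),
            (∏ k ∈ Finset.univ.erase j, (if b k then α else 1 - α)) *
              (if T ω j b ≤ t then (1 : ℝ) else 0) ∂ℙ := by
  classical
  set S : (Fin n → Bool) → Set Ω := fun b => {ω | T ω j b ≤ t} with hS_def
  set B : (Fin n → Bool) → Set Ω := fun b => A ⁻¹' {b} with hB_def
  have hSmeas : ∀ b, MeasurableSet (S b) := fun b =>
    measurableSet_le ((measurable_pi_apply b).comp ((measurable_pi_apply j).comp hT))
      measurable_const
  have hBmeas : ∀ b, MeasurableSet (B b) := fun b => hA (MeasurableSet.singleton b)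
  rw [condIndepFun_iff_condExp_inter_preimage_eq_mul hT hA] at hCI
  have hmul : ∀ b : Fin n → Bool,
      ((ℙ : Measure Ω)⟦S b ∩ B b | mC L⟧) =ᵐ[(ℙ : Measure Ω)]
        fun ω => ((ℙ : Measure Ω)⟦S b | mC L⟧) ω * ((ℙ : Measure Ω)⟦B b | mC L⟧) ω := by
    intro b
    have hs : MeasurableSet {f : Fin n → (Fin n → Bool) → ℝ | f j b ≤ t} :=
      measurableSet_le ((measurable_pi_apply b).comp (measurable_pi_apply j)) measurable_const
    have h := hCI {f : Fin n → (Fin n → Bool) → ℝ | f j b ≤ t} {b} hs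
      (MeasurableSet.singleton b)
    exact h
  have hpq : ∀ b : Fin n → Bool, (fun ω => p (L ω) b) =ᵐ[(ℙ : Measure Ω)]
      (ℙ : Measure Ω)⟦B b | mC L⟧ := by
    intro b
    have heq : (fun ω => if A ω = b then (1:ℝ) else 0)
        = (B b).indicator (fun _ => (1:ℝ)) := by
      funext ω
      simp [hB_def, Set.indicator_apply, Set.mem_preimage]
    have := hp b
    rwa [heq] at this
  have core : ∀ b : Fin n → Bool,
      Integrable (fun ω => (S b).indicator (fun _ => (1:ℝ)) ω *
        (B b).indicator (fun _ => (1:ℝ)) ω / p (L ω) b) (ℙ : Measure Ω) ∧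
      ∫ ω, (S b).indicator (fun _ => (1:ℝ)) ω * (B b).indicator (fun _ => (1:ℝ)) ω /
          p (L ω) b ∂(ℙ : Measure Ω)
        = ∫ ω, (S b).indicator (fun _ => (1:ℝ)) ω ∂(ℙ : Measure Ω) :=
    fun b => tv_core hL (hSmeas b) (hBmeas b) (hmul b) (hpq b) (hppos b)
  set c : (Fin n → Bool) → ℝ := fun b =>
    if b j = a then (∏ k ∈ Finset.univ.erase j, (if b k then α else 1 - α)) else 0 with hc_def
  have key : ∀ ω, (∏ k ∈ Finset.univ.erase j, (if A ω k then α else 1 - α)) *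
          (if A ω j = a then (1:ℝ) else 0) * (if T ω j (A ω) ≤ t then (1:ℝ) else 0) /
          p (L ω) (A ω)
      = ∑ b : Fin n → Bool, c b *
          ((S b).indicator (fun _ => (1:ℝ)) ω * (B b).indicator (fun _ => (1:ℝ)) ω /
            p (L ω) b) := by
    intro ω
    rw [Finset.sum_eq_single (A ω)]
    · have hBA : (B (A ω)).indicator (fun _ => (1:ℝ)) ω = 1 := by
        simp [hB_def, Set.indicator_apply]
      have hSA : (S (A ω)).indicator (fun _ => (1:ℝ)) ω
          = if T ω j (A ω) ≤ t then (1:ℝ) else 0 := by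
        simp [hS_def, Set.indicator_apply]
      rw [hBA, hSA, mul_one, hc_def]
      by_cases h : A ω j = a <;> by_cases h2 : T ω j (A ω) ≤ t <;>
        simp [h, h2, div_eq_mul_inv] <;> ring
    · intro b _ hb
      have hb0 : (B b).indicator (fun _ => (1:ℝ)) ω = 0 := by
        simp only [hB_def, Set.indicator_apply, Set.mem_preimage, Set.mem_singleton_iff]
        exact if_neg (fun h => hb h.symm)
      rw [hb0, mul_zero, zero_div, mul_zero]
    · intro h; exact absurd (Finset.mem_univ _) h
  have lhs_eq : ∫ ω, (∏ k ∈ Finset.univ.erase j, (if A ω k then α else 1 - α)) *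
          (if A ω j = a then (1:ℝ) else 0) * (if T ω j (A ω) ≤ t then (1:ℝ) else 0) /
          p (L ω) (A ω) ∂(ℙ : Measure Ω)
      = ∑ b : Fin n → Bool, c b * ∫ ω, (S b).indicator (fun _ => (1:ℝ)) ω ∂(ℙ : Measure Ω) := by
    rw [integral_congr_ae (Eventually.of_forall key),
      integral_finset_sum _ (fun b _ => ((core b).1.const_mul (c b)))]
    exact Finset.sum_congr rfl fun b _ => by rw [integral_const_mul _ _, (core b).2]
  have hpt : ∀ b ω, (if T ω j b ≤ t then (1:ℝ) else 0)
      = (S b).indicator (fun _ => (1:ℝ)) ω := fun b ω => by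
    simp [hS_def, Set.indicator_apply]
  have rhs_eq : ∫ ω, (∑ b ∈ Finset.univ.filter (fun b : Fin n → Bool => b j = a),
        (∏ k ∈ Finset.univ.erase j, (if b k then α else 1 - α)) *
          (if T ω j b ≤ t then (1:ℝ) else 0)) ∂(ℙ : Measure Ω)
      = ∑ b ∈ Finset.univ.filter (fun b : Fin n → Bool => b j = a),
          (∏ k ∈ Finset.univ.erase j, (if b k then α else 1 - α)) *
            ∫ ω, (S b).indicator (fun _ => (1:ℝ)) ω ∂(ℙ : Measure Ω) := by
    simp_rw [hpt]
    rw [integral_finset_sum _ (fun b _ =>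
      ((integrable_const (1:ℝ)).indicator (hSmeas b)).const_mul _)]
    exact Finset.sum_congr rfl fun b _ => integral_const_mul _ _
  rw [lhs_eq, rhs_eq, Finset.sum_filter]
  exact Finset.sum_congr rfl fun b _ => by
    rw [hc_def]; by_cases h : b j = a <;> simp [h]
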